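/- Let D be the incidence matrix of a tree on vertices {1,...,n} rooted at vertex 1, and let P be the (n-1)×(n-1) path matrix whose i-th column is the incidence vector of the path from vertex i+1 to the root 1. Then the Moore–Penrose pseudo-inverse of D is D^+ = [ -(1/n) P 1 , P J ], where 1 is the all-ones vector in R^{n-1} and J = I - (1/n) 1 1^T. -/

import Mathlib

open Matrix

/-- Signed incidence matrix of an oriented graph with `n` vertices and `m` edges. -/
def incMat (n m : ℕ) (tail head : Fin m → Fin n) : Matrix (Fin n) (Fin m) ℝ :=
  Matrix.of fun i j => (if tail j = i then (1 : ℝ) else 0) - (if head j = i then (1 : ℝ) else 0)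

/-- Source vertex of an oriented step (edge together with a traversal direction). -/
def stepSrc {n m : ℕ} (tail head : Fin m → Fin n) (p : Fin m × Bool) : Fin n :=
  if p.2 then tail p.1 else head p.1

/-- Destination vertex of an oriented step. -/
def stepDst {n m : ℕ} (tail head : Fin m → Fin n) (p : Fin m × Bool) : Fin n :=
  if p.2 then head p.1 else tail p.1

/-- `IsOPath tail head steps s t` : the list of directed steps forms a walk from `s` to `t`. -/
def IsOPath {n m : ℕ} (tail head : Fin m → Fin n) :
    List (Fin m × Bool) → Fin n → Fin n → Prop
  | [], s, t => s = t
  | p :: rest, s, t => stepSrc tail head p = s ∧ IsOPath tail head rest (stepDst tail head p) t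

/-- Signed incidence vector of a path given by its list of directed steps. -/
def pathVec {m : ℕ} (steps : List (Fin m × Bool)) (j : Fin m) : ℝ :=
  (steps.map (fun p => if p.1 = j then (if p.2 then (1 : ℝ) else -1) else 0)).sum

/-- The four Penrose conditions characterizing the Moore–Penrose pseudo-inverse. -/
def IsMoorePenrose {n m : ℕ} (A : Matrix (Fin n) (Fin m) ℝ) (B : Matrix (Fin m) (Fin n) ℝ) : Prop :=
  A * B * A = A ∧ B * A * B = B ∧ (A * B)ᵀ = A * B ∧ (B * A)ᵀ = B * A

/-- The oriented graph is simple: no self-loops and no multi-edges. -/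
def SimpleOriented {n m : ℕ} (tail head : Fin m → Fin n) : Prop :=
  (∀ j, tail j ≠ head j) ∧
  ∀ j k, j ≠ k →
    ¬((tail j = tail k ∧ head j = head k) ∨ (tail j = head k ∧ head j = tail k))

/-- The graph is connected: any two vertices are joined by a path. -/
def OConnected {n m : ℕ} (tail head : Fin m → Fin n) : Prop :=
  ∀ u v : Fin n, ∃ steps, IsOPath tail head steps u v

/-- The graph is acyclic: no nonempty closed walk with pairwise distinct edges. -/
def OAcyclic {n m : ℕ} (tail head : Fin m → Fin n) : Prop :=
  ∀ (v : Fin n) (steps : List (Fin m × Bool)), steps ≠ [] →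
    (steps.map Prod.fst).Nodup → ¬ IsOPath tail head steps v v

lemma telescope {N m : ℕ} (tail head : Fin m → Fin N) (steps : List (Fin m × Bool)) :
    ∀ s t : Fin N, IsOPath tail head steps s t →
    ∀ v : Fin N, ∑ j, incMat N m tail head v j * pathVec steps j
      = (if s = v then 1 else 0) - (if t = v then 1 else 0) := by
  induction steps with
  | nil =>
    intro s t h v
    have h' : s = t := h
    simp [pathVec, h']
  | cons p rest ih =>
    intro s t h v
    obtain ⟨hsrc, hrest⟩ := h
    have ih' := ih (stepDst tail head p) t hrest v
    have hpv : ∀ j, pathVec (p :: rest) j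
        = (if p.1 = j then (if p.2 then (1:ℝ) else -1) else 0) + pathVec rest j := by
      intro j; simp [pathVec]
    simp_rw [hpv, mul_add, Finset.sum_add_distrib, ih']
    have hfst : ∑ j, incMat N m tail head v j *
        (if p.1 = j then (if p.2 then (1:ℝ) else -1) else 0)
        = (if stepSrc tail head p = v then 1 else 0)
          - (if stepDst tail head p = v then 1 else 0) := by
      simp only [mul_ite, mul_zero, Finset.sum_ite_eq, Finset.mem_univ, if_true]
      obtain ⟨e, b⟩ := p
      cases b <;> simp [incMat, stepSrc, stepDst]
    rw [hsrc] at hfst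
    rw [hfst]; ring

/-- explicit formula for the Moore–Penrose pseudo-inverse of the incidence
matrix of a tree rooted at vertex `0` (vertex "1"), in terms of the path matrix `P`:
`D⁺ = [ -(1/n) P 𝟙 , P J ]` with `J = I - (1/n) 𝟙 𝟙ᵀ`. Vertices are `Fin (n+1)`,
edges are `Fin n`, and column `i` of `P` is the incidence vector of the path from
vertex `i+1` to the root `0`. -/
theorem stmt5 (n : ℕ) (tail head : Fin n → Fin (n + 1))
    (hsimple : SimpleOriented tail head)
    (hconn : OConnected tail head) (hacyc : OAcyclic tail head)
    (P : Matrix (Fin n) (Fin n) ℝ)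
    (pathsteps : Fin n → List (Fin n × Bool))
    (hP : ∀ i : Fin n, ((pathsteps i).map Prod.fst).Nodup ∧
      IsOPath tail head (pathsteps i) i.succ 0 ∧
      ∀ j : Fin n, P j i = pathVec (pathsteps i) j) :
    IsMoorePenrose (incMat (n + 1) n tail head)
      (Matrix.of fun (j : Fin n) (i : Fin (n + 1)) =>
        if h : i = 0 then -(1 / (n + 1 : ℝ)) * ∑ k : Fin n, P j k
        else ((P * ((1 : Matrix (Fin n) (Fin n) ℝ) -
          ((n + 1 : ℝ))⁻¹ • Matrix.of (fun _ _ => (1 : ℝ))) :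
            Matrix (Fin n) (Fin n) ℝ)) j (i.pred h)) := by
  set A := incMat (n + 1) n tail head with hA
  set c : ℝ := ((n : ℝ) + 1)⁻¹ with hc
  have hne : ((n : ℝ) + 1) ≠ 0 := by positivity
  have hc1 : ((n : ℝ) + 1) * c = 1 := mul_inv_cancel₀ hne
  have hDP : ∀ (v : Fin (n+1)) (i : Fin n),
      ∑ j, A v j * P j i = (if i.succ = v then 1 else 0) - (if (0 : Fin (n+1)) = v then 1 else 0) := by
    intro v i
    obtain ⟨-, hpath, hval⟩ := hP i
    simp_rw [hval]
    exact telescope tail head (pathsteps i) i.succ 0 hpath v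
  have hcol : ∀ j, ∑ v : Fin (n+1), A v j = 0 := by
    intro j
    simp [hA, incMat, Finset.sum_sub_distrib]
  set D0 : Matrix (Fin n) (Fin n) ℝ := Matrix.of (fun k j => A k.succ j) with hD0
  have hD0P : D0 * P = 1 := by
    ext k i
    rw [Matrix.mul_apply]
    show (∑ j, A k.succ j * P j i) = _
    rw [hDP k.succ i]
    simp [Matrix.one_apply, Fin.succ_inj, (Fin.succ_ne_zero k).symm, eq_comm]
  have hPD0 : P * D0 = 1 := mul_eq_one_comm.mp hD0P
  set M : Matrix (Fin n) (Fin (n+1)) ℝ :=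
    Matrix.of (fun k i => (if i = k.succ then (1:ℝ) else 0) - c) with hM
  have hB : (Matrix.of fun (j : Fin n) (i : Fin (n + 1)) =>
        if h : i = 0 then -(1 / (n + 1 : ℝ)) * ∑ k : Fin n, P j k
        else ((P * ((1 : Matrix (Fin n) (Fin n) ℝ) -
          ((n + 1 : ℝ))⁻¹ • Matrix.of (fun _ _ => (1 : ℝ))) :
            Matrix (Fin n) (Fin n) ℝ)) j (i.pred h)) = P * M := by
    ext j i
    rw [Matrix.mul_apply]
    by_cases h : i = 0
    · rw [Matrix.of_apply, dif_pos h]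
      have hfalse : ∀ k : Fin n, i ≠ k.succ := fun k => h ▸ (Fin.succ_ne_zero k).symm
      have hsum : (∑ k, P j k * (M k i)) = (∑ k, P j k) * (0 - c) := by
        rw [Finset.sum_mul]
        refine Finset.sum_congr rfl fun k _ => ?_
        rw [hM, Matrix.of_apply, if_neg (hfalse k)]
      rw [hsum, hc]
      ring
    · simp only [Matrix.of_apply, dif_neg h, hM, Matrix.mul_apply, Matrix.sub_apply,
        Matrix.one_apply, Matrix.smul_apply, smul_eq_mul, mul_one]
      refine Finset.sum_congr rfl fun k _ => ?_
      have e : (i = k.succ) = (k = i.pred h) := by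
        apply propext
        constructor
        · intro e; subst e; simp
        · intro e; subst e; simp
      simp only [e]
      rw [hc]
  rw [hB]
  have hMA : M * A = D0 := by
    ext k j
    rw [Matrix.mul_apply]
    simp only [hM, hD0, Matrix.of_apply, sub_mul, Finset.sum_sub_distrib, ite_mul, one_mul,
      zero_mul]
    rw [← Finset.mul_sum, hcol j, mul_zero, sub_zero, Finset.sum_ite_eq']
    simp
  have hBA : P * M * A = 1 := by
    rw [Matrix.mul_assoc, hMA, hPD0]
  have hAP : A * P = Matrix.of (fun v i =>
      (if i.succ = v then (1:ℝ) else 0) - (if (0 : Fin (n+1)) = v then 1 else 0)) := by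
    ext v i
    rw [Matrix.mul_apply]
    exact hDP v i
  have hAB : A * (P * M) = Matrix.of (fun u w => (if u = w then (1:ℝ) else 0) - c) := by
    rw [← Matrix.mul_assoc, hAP]
    ext u w
    rw [Matrix.mul_apply]
    simp only [Matrix.of_apply, hM]
    have key : ∀ g : Fin (n+1) → ℝ, ∑ i : Fin n, g i.succ = (∑ v : Fin (n+1), g v) - g 0 := by
      intro g; rw [Fin.sum_univ_succ]; ring
    rw [key (fun v => ((if v = u then (1:ℝ) else 0) - (if (0:Fin (n+1)) = u then 1 else 0)) *
      ((if w = v then (1:ℝ) else 0) - c))]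
    have hwu : (if w = u then (1:ℝ) else 0) = (if u = w then 1 else 0) := by
      simp [eq_comm]
    by_cases h0 : (0 : Fin (n+1)) = u
    · subst h0
      simp only [if_pos rfl, sub_self, zero_mul, sub_zero, sub_mul, mul_sub, one_mul,
        Finset.sum_sub_distrib, ite_mul, zero_mul, mul_ite, mul_one, mul_zero,
        Finset.sum_ite_eq', Finset.sum_ite_eq, Finset.mem_univ, if_true,
        Finset.sum_const, Finset.card_univ, Fintype.card_fin, nsmul_eq_mul, ite_self]
      push_cast
      rw [hwu, hc]
      field_simp
      by_cases hw : (0 : Fin (n+1)) = w <;> simp [hw] <;> ring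
    · simp only [if_neg h0, sub_zero, sub_mul, mul_sub, one_mul, zero_mul,
        Finset.sum_sub_distrib, ite_mul, mul_ite, mul_one, mul_zero,
        Finset.sum_ite_eq', Finset.sum_ite_eq, Finset.mem_univ, if_true,
        Finset.sum_const, Finset.card_univ, Fintype.card_fin, nsmul_eq_mul, ite_self]
      rw [hwu]
      all_goals ring
  refine ⟨?_, ?_, ?_, ?_⟩
  · rw [hAB]
    ext v j
    rw [Matrix.mul_apply]
    simp only [Matrix.of_apply, sub_mul, Finset.sum_sub_distrib, ite_mul, one_mul, zero_mul,
      Finset.sum_ite_eq, Finset.mem_univ, if_true]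
    rw [← Finset.mul_sum, hcol j, mul_zero, sub_zero]
  · rw [hBA, Matrix.one_mul]
  · rw [hAB]
    ext u w
    simp only [Matrix.transpose_apply, Matrix.of_apply]
    congr 1
    simp [eq_comm]
  · rw [hBA]; exact Matrix.transpose_one
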